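/- Let 𝔤 = 𝔤⁰_{3.4} ⊕ 𝔤₁ be the 4-dimensional real Lie algebra with basis e₁,...,e₄ and nonzero brackets [e₂,e₃] = e₁ and [e₃,e₁] = −e₂. A 4×4 real matrix R equals η·Id + D for some η ∈ ℝ and some derivation D of 𝔤 if and only if R₃₁ = R₄₁ = R₃₂ = R₄₂ = 0, R₁₄ = R₂₄ = R₃₄ = 0, R₂₁ = R₁₂, and R₂₂ = R₁₁. In this case η = R₃₃. -/

import Mathlib

open Matrix

/-- The Lie bracket of the Lie algebra, in coordinates. -/
def br (x y : Fin 4 → ℝ) : Fin 4 → ℝ :=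
  ![(x 1 * y 2 - x 2 * y 1), -(x 2 * y 0 - x 0 * y 2), (0:ℝ), (0:ℝ)]

/-- `D` (acting via `mulVec`) is a derivation of the bracket. -/
def IsDer (D : Matrix (Fin 4) (Fin 4) ℝ) : Prop :=
  ∀ x y : Fin 4 → ℝ, D.mulVec (br x y) = br (D.mulVec x) y + br x (D.mulVec y)

lemma isDer_explicit (a b c d e f : ℝ) :
    IsDer !![a,b,c,0; b,a,d,0; 0,0,0,0; 0,0,e,f] := by
  intro x y
  funext i
  fin_cases i <;>
    simp [br, Matrix.mulVec, dotProduct, Fin.sum_univ_four] <;> ring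

lemma der_facts (D : Matrix (Fin 4) (Fin 4) ℝ) (hD : IsDer D) :
    D 2 0 = 0 ∧ D 3 0 = 0 ∧ D 2 1 = 0 ∧ D 3 1 = 0 ∧ D 0 3 = 0 ∧ D 1 3 = 0 ∧
      D 2 3 = 0 ∧ D 1 0 = D 0 1 ∧ D 1 1 = D 0 0 ∧ D 2 2 = 0 := by
  have h02 := hD ![1,0,0,0] ![0,0,1,0]
  have h12 := hD ![0,1,0,0] ![0,0,1,0]
  have h13 := hD ![0,1,0,0] ![0,0,0,1]
  have h23 := hD ![0,0,1,0] ![0,0,0,1]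
  simp [br, Matrix.mulVec, dotProduct, Fin.sum_univ_four, funext_iff,
    Fin.forall_fin_succ] at h02 h12 h13 h23
  have e3 : (Fin.succ 2 : Fin 4) = 3 := rfl
  obtain ⟨a1, a2, a3, a4⟩ := h02
  obtain ⟨b1, b2, b3, b4⟩ := h12
  obtain ⟨c1, c2⟩ := h23
  refine ⟨b3, b4, a3, a4, c2, c1, h13.symm, b2, by linarith, by linarith⟩

theorem stmt_5 (R : Matrix (Fin 4) (Fin 4) ℝ) :
    ((∃ (η : ℝ) (D : Matrix (Fin 4) (Fin 4) ℝ), IsDer D ∧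
        R = η • (1 : Matrix (Fin 4) (Fin 4) ℝ) + D) ↔
      (R 2 0 = 0 ∧ R 3 0 = 0 ∧ R 2 1 = 0 ∧ R 3 1 = 0 ∧ R 0 3 = 0 ∧ R 1 3 = 0 ∧ R 2 3 = 0 ∧ R 1 0 = R 0 1 ∧ R 1 1 = R 0 0)) ∧
    (∀ (η : ℝ) (D : Matrix (Fin 4) (Fin 4) ℝ), IsDer D →
      R = η • (1 : Matrix (Fin 4) (Fin 4) ℝ) + D → η = R 2 2) := by
  constructor
  · constructor
    · rintro ⟨η, D, hD, rfl⟩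
      obtain ⟨f1, f2, f3, f4, f5, f6, f7, f8, f9, f10⟩ := der_facts D hD
      simp [Matrix.add_apply, Matrix.smul_apply, Matrix.one_apply]
      refine ⟨f1, f2, f3, f4, f5, f6, f7, f8, by linarith⟩
    · rintro ⟨h1, h2, h3, h4, h5, h6, h7, h8, h9⟩
      refine ⟨R 2 2, !![R 0 0 - R 2 2, R 0 1, R 0 2, 0;
          R 0 1, R 0 0 - R 2 2, R 1 2, 0; 0,0,0,0; 0,0,R 3 2, R 3 3 - R 2 2],
        isDer_explicit _ _ _ _ _ _, ?_⟩
      funext i j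
      fin_cases i <;> fin_cases j <;>
        simp [Matrix.add_apply, Matrix.smul_apply, Matrix.one_apply, Matrix.vecHead, Matrix.vecTail] <;>
        first
          | linarith
          | ring
  · rintro η D hD rfl
    obtain ⟨-, -, -, -, -, -, -, -, -, f10⟩ := der_facts D hD
    simp [Matrix.add_apply, Matrix.smul_apply, Matrix.one_apply, f10]
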